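/- arXiv:1912.04027 — 2 statements merged into one kernel-verified Lean document; each statement's English description precedes it below -/
import Mathlib

section
/- Let M be a topological space, φ : M × ℝ → M a flow on M, and W ⊂ M an open set such that every egress point of W is a strict egress point (W⁻ = W⁻⁻). Then the exit map m(x) = φ(x, σ(x)) is a continuous map from {x ∈ W ∪ W⁻ : σ(x) < ∞} into the set of egress points W⁻, and m(x) = x for every x ∈ W⁻. -/
open scoped ENNReal

/-- The set of egress points of an open set `W` with respect to the flow `φ`. -/
def flowEgress {M : Type*} [TopologicalSpace M] (φ : M → ℝ → M) (W : Set M) : Set M :=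
  {x ∈ frontier W | ∃ ε > (0 : ℝ), ∀ t ∈ Set.Ioo (-ε) (0 : ℝ), φ x t ∈ W}

/-- The set of strict egress points of `W` with respect to the flow `φ`. -/
def flowStrictEgress {M : Type*} [TopologicalSpace M] (φ : M → ℝ → M) (W : Set M) : Set M :=
  {x ∈ flowEgress φ W | ∃ ε > (0 : ℝ), ∀ t ∈ Set.Ioo (0 : ℝ) ε, φ x t ∉ W ∪ frontier W}

/-- The egress time `σ(x) = sup {τ ≥ 0 : φ x t ∈ W for all t ∈ [0, τ)}`, valued in `ℝ≥0∞`. -/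
noncomputable def flowEgressTime {M : Type*} [TopologicalSpace M] (φ : M → ℝ → M)
    (W : Set M) (x : M) : ℝ≥0∞ :=
  sSup {τ : ℝ≥0∞ | ∀ t : ℝ, 0 ≤ t → ENNReal.ofReal t < τ → φ x t ∈ W}

section Aux

variable {M : Type*} [TopologicalSpace M] {φ : M → ℝ → M} {W : Set M}

lemma flowEgressTime_eq_zero_of_not_mem (hφ0 : ∀ x, φ x 0 = x) {x : M} (hx : x ∉ W) :
    flowEgressTime φ W x = 0 := by
  refine le_antisymm (sSup_le fun τ hτ => ?_) zero_le
  by_contra h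
  have hpos : (0 : ℝ≥0∞) < τ := pos_iff_ne_zero.mpr (by simpa using h)
  have := hτ 0 le_rfl (by simpa using hpos)
  rw [hφ0] at this
  exact hx this

lemma mem_of_lt_flowEgressTime {x : M} {t : ℝ} (ht : 0 ≤ t)
    (h : ENNReal.ofReal t < flowEgressTime φ W x) : φ x t ∈ W := by
  obtain ⟨τ, hτ, hlt⟩ := lt_sSup_iff.mp h
  exact hτ t ht hlt

lemma le_flowEgressTime {x : M} {τ : ℝ≥0∞}
    (h : ∀ t : ℝ, 0 ≤ t → ENNReal.ofReal t < τ → φ x t ∈ W) :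
    τ ≤ flowEgressTime φ W x :=
  le_sSup h

end Aux

/-- If `W⁻ = W⁻⁻`, the exit map `m(x) = φ(x, σ(x))` is continuous on the set of
points of `W ∪ W⁻` with finite egress time, maps this set into the set `W⁻` of
egress points, and fixes every egress point. -/
theorem exitMap_continuousOn
    {M : Type*} [TopologicalSpace M] (φ : M → ℝ → M)
    (hφcont : Continuous fun p : M × ℝ => φ p.1 p.2)
    (hφ0 : ∀ x, φ x 0 = x)
    (hφadd : ∀ x t s, φ x (t + s) = φ (φ x t) s)
    (W : Set M) (hWopen : IsOpen W)
    (hWeq : flowEgress φ W = flowStrictEgress φ W) :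
    ContinuousOn (fun x => φ x (flowEgressTime φ W x).toReal)
      {x | x ∈ W ∪ flowEgress φ W ∧ flowEgressTime φ W x ≠ ⊤} ∧
    Set.MapsTo (fun x => φ x (flowEgressTime φ W x).toReal)
      {x | x ∈ W ∪ flowEgress φ W ∧ flowEgressTime φ W x ≠ ⊤} (flowEgress φ W) ∧
    ∀ x ∈ flowEgress φ W, φ x (flowEgressTime φ W x).toReal = x := by
  -- egress points are not in W
  have hnotW : ∀ x ∈ flowEgress φ W, x ∉ W := by
    intro x hx
    have := hx.1
    rw [hWopen.frontier_eq] at this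
    exact this.2
  -- the exit map fixes egress points
  have hfix : ∀ x ∈ flowEgress φ W, φ x (flowEgressTime φ W x).toReal = x := by
    intro x hx
    rw [flowEgressTime_eq_zero_of_not_mem hφ0 (hnotW x hx)]
    simp [hφ0]
  -- positivity of σ on W
  have hposW : ∀ x ∈ W, 0 < flowEgressTime φ W x := by
    intro x hxW
    have hc : Continuous fun t : ℝ => φ x t := hφcont.comp (continuous_const.prodMk continuous_id)
    have hev : ∀ᶠ t in nhds (0 : ℝ), φ x t ∈ W := by
      have : φ x 0 ∈ W := by rw [hφ0]; exact hxW
      exact hc.continuousAt.eventually_mem (hWopen.mem_nhds this)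
    obtain ⟨δ, hδpos, hδ⟩ := Metric.eventually_nhds_iff.mp hev
    refine lt_of_lt_of_le (ENNReal.ofReal_pos.2 hδpos) (le_flowEgressTime fun t ht hlt => ?_)
    have htδ : t < δ := (ENNReal.ofReal_lt_ofReal_iff hδpos).mp hlt
    exact hδ (by rw [Real.dist_eq, sub_zero, abs_of_nonneg ht]; exact htδ)
  -- the MapsTo part
  have hmaps : Set.MapsTo (fun x => φ x (flowEgressTime φ W x).toReal)
      {x | x ∈ W ∪ flowEgress φ W ∧ flowEgressTime φ W x ≠ ⊤} (flowEgress φ W) := by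
    rintro x ⟨hxWE, hxfin⟩
    rcases hxWE with hxW | hxE
    swap
    · simpa [hfix x hxE] using hxE
    have hpos : 0 < flowEgressTime φ W x := hposW x hxW
    have hspos : 0 < (flowEgressTime φ W x).toReal := ENNReal.toReal_pos hpos.ne' hxfin
    have hσeq : ENNReal.ofReal (flowEgressTime φ W x).toReal = flowEgressTime φ W x :=
      ENNReal.ofReal_toReal hxfin
    set s := (flowEgressTime φ W x).toReal with hs
    have hIco : ∀ t : ℝ, 0 ≤ t → t < s → φ x t ∈ W := fun t ht hlt =>
      mem_of_lt_flowEgressTime ht (hσeq ▸ (ENNReal.ofReal_lt_ofReal_iff hspos).mpr hlt)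
    have hclos : φ x s ∈ closure W := by
      have hc : ContinuousWithinAt (fun t : ℝ => φ x t) (Set.Ico 0 s) s :=
        (hφcont.comp (continuous_const.prodMk continuous_id)).continuousWithinAt
      have hsmem : s ∈ closure (Set.Ico 0 s) := by
        rw [closure_Ico hspos.ne]; exact ⟨hspos.le, le_rfl⟩
      refine closure_mono ?_ (hc.mem_closure_image hsmem)
      exact Set.image_subset_iff.mpr fun t ht => hIco t ht.1 ht.2
    have hnot : φ x s ∉ W := by
      intro hmem
      have hc : Continuous fun t : ℝ => φ x t :=
        hφcont.comp (continuous_const.prodMk continuous_id)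
      obtain ⟨δ, hδpos, hδ⟩ := Metric.eventually_nhds_iff.mp
        (hc.continuousAt.eventually_mem (hWopen.mem_nhds hmem))
      have hle : ENNReal.ofReal (s + δ) ≤ flowEgressTime φ W x := by
        refine le_flowEgressTime fun t ht hlt => ?_
        have htlt : t < s + δ := (ENNReal.ofReal_lt_ofReal_iff (by linarith)).mp hlt
        rcases lt_or_ge t s with h | h
        · exact hIco t ht h
        · refine hδ ?_
          rw [Real.dist_eq, abs_of_nonneg (sub_nonneg.2 h)]
          linarith
      rw [← hσeq] at hle
      have := (ENNReal.ofReal_le_ofReal_iff hspos.le).mp hle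
      linarith
    refine ⟨by rw [hWopen.frontier_eq]; exact ⟨hclos, hnot⟩, s, hspos, fun t ht => ?_⟩
    rw [← hφadd x s t]
    exact hIco (s + t) (by linarith [ht.1]) (by linarith [ht.2])
  -- continuity of σ.toReal on the domain
  have hσcont : ContinuousOn (fun x => (flowEgressTime φ W x).toReal)
      {x | x ∈ W ∪ flowEgress φ W ∧ flowEgressTime φ W x ≠ ⊤} := by
    intro x₀ hx₀
    obtain ⟨hx₀W, hx₀fin⟩ := hx₀
    have hs₀nonneg : 0 ≤ (flowEgressTime φ W x₀).toReal := ENNReal.toReal_nonneg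
    have hy₀ : φ x₀ (flowEgressTime φ W x₀).toReal ∈ flowEgress φ W := hmaps ⟨hx₀W, hx₀fin⟩
    have hy₀' : φ x₀ (flowEgressTime φ W x₀).toReal ∈ flowStrictEgress φ W := hWeq ▸ hy₀
    obtain ⟨-, ε, hεpos, hε⟩ := hy₀'
    have hσ₀eq : ENNReal.ofReal (flowEgressTime φ W x₀).toReal = flowEgressTime φ W x₀ :=
      ENNReal.ofReal_toReal hx₀fin
    set s₀ := (flowEgressTime φ W x₀).toReal with hs₀
    rw [ContinuousWithinAt]
    refine tendsto_order.2 ⟨?_, ?_⟩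
    · intro a ha
      rcases lt_or_ge a 0 with h | h
      · filter_upwards with x using lt_of_lt_of_le h ENNReal.toReal_nonneg
      · have hs₀pos : 0 < s₀ := lt_of_le_of_lt h ha
        have hx₀inW : x₀ ∈ W := by
          rcases hx₀W with h' | h'
          · exact h'
          · exfalso
            have h0 : flowEgressTime φ W x₀ = 0 :=
              flowEgressTime_eq_zero_of_not_mem hφ0 (hnotW _ h')
            rw [hs₀, h0] at hs₀pos
            simp at hs₀pos
        set b := (a + s₀) / 2 with hbdef
        have hab : a < b := by rw [hbdef]; linarith
        have hbs : b < s₀ := by rw [hbdef]; linarith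
        have hbpos : 0 < b := lt_of_le_of_lt h hab
        have hopen : IsOpen {p : M × ℝ | φ p.1 p.2 ∈ W} := hWopen.preimage hφcont
        have hsub : ({x₀} : Set M) ×ˢ Set.Icc 0 b ⊆ {p : M × ℝ | φ p.1 p.2 ∈ W} := by
          rintro ⟨z, r⟩ ⟨hz, hr⟩
          simp only [Set.mem_singleton_iff] at hz
          subst hz
          exact mem_of_lt_flowEgressTime hr.1
            (hσ₀eq ▸ (ENNReal.ofReal_lt_ofReal_iff hs₀pos).mpr (lt_of_le_of_lt hr.2 hbs))
        obtain ⟨u, v, huo, -, hxu, htv, huv⟩ :=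
          generalized_tube_lemma isCompact_singleton isCompact_Icc hopen hsub
        have hu : u ∈ nhds x₀ := huo.mem_nhds (hxu rfl)
        filter_upwards [mem_nhdsWithin_of_mem_nhds hu, self_mem_nhdsWithin] with x hxu' hxA
        have hble : ENNReal.ofReal b ≤ flowEgressTime φ W x := by
          refine le_flowEgressTime fun t ht hlt => ?_
          have htb : t < b := (ENNReal.ofReal_lt_ofReal_iff hbpos).mp hlt
          exact huv (Set.mk_mem_prod hxu' (htv ⟨ht, htb.le⟩))
        have := (ENNReal.ofReal_le_iff_le_toReal hxA.2).mp hble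
        linarith
    · intro b hb
      set δ := min (ε / 2) ((b - s₀) / 2) with hδdef
      have hδpos : 0 < δ := lt_min (by linarith) (by linarith)
      have hδε : δ < ε := lt_of_le_of_lt (min_le_left _ _) (by linarith)
      have hδb : s₀ + δ < b := by
        have : δ ≤ (b - s₀) / 2 := min_le_right _ _
        linarith
      have hout : φ x₀ (s₀ + δ) ∉ closure W := by
        rw [hφadd x₀ s₀ δ, closure_eq_self_union_frontier]
        exact hε δ ⟨hδpos, hδε⟩
      have hopen2 : IsOpen {x | φ x (s₀ + δ) ∉ closure W} :=
        isClosed_closure.isOpen_compl.preimage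
          (hφcont.comp (continuous_id.prodMk continuous_const))
      have hu : {x | φ x (s₀ + δ) ∉ closure W} ∈ nhds x₀ := hopen2.mem_nhds hout
      filter_upwards [mem_nhdsWithin_of_mem_nhds hu, self_mem_nhdsWithin] with x hx hxA
      have hle : flowEgressTime φ W x ≤ ENNReal.ofReal (s₀ + δ) := by
        by_contra hcon
        exact hx (subset_closure
          (mem_of_lt_flowEgressTime (by linarith) (not_le.mp hcon)))
      have := ENNReal.toReal_le_of_le_ofReal (by linarith) hle
      linarith
  exact ⟨hφcont.comp_continuousOn (continuousOn_id.prodMk hσcont), hmaps, hfix⟩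
end

section
/- Under the hypotheses of Theorem 2.13 — M a topological space, Φ a continuous semi-process on M, W ⊂ M × ℝ open with W⁻ = W⁻⁻ and W₀⁻⁻ ≠ ∅, x₀ a uniformly Lyapunov stable equilibrium, U open with x₀ ∈ U and closure(U) × ℝ ⊂ W, and Γ : [0,1] → M × ℝ a continuous path with Γ(s) ∈ W₀ for s ∈ (0,1), Γ(0) = (x₀,0), Γ(1) ∈ W₀⁻⁻ — there exists a point (x,0) on the path Γ such that σ(x) = ∞ (the half-trajectory of x never leaves W) and Φ_{0,t}(x) does not converge to x₀ as t → ∞. -/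
open scoped ENNReal

/-- The egress time of `x` (with initial time `0`) from `W ⊆ M × ℝ` for the
semi-process `Φ` (written `Φ x t₀ t` for `Φ_{t₀,t}(x)`):
`σ(x) = sup {τ ≥ 0 : (Φ_{0,t}(x), t) ∈ W for all t ∈ [0, τ)}`, valued in `ℝ≥0∞`.
For `(x, 0) ∈ ∂W` this supremum equals `0`. -/
noncomputable def spEgressTime {M : Type*}
    (Φ : M → ℝ → ℝ → M) (W : Set (M × ℝ)) (x : M) : ℝ≥0∞ :=
  sSup {τ : ℝ≥0∞ | ∀ t : ℝ, 0 ≤ t → ENNReal.ofReal t < τ → (Φ x 0 t, t) ∈ W}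

/-- Egress points of `W ⊆ M × ℝ` for the semi-process `Φ`: boundary points
`(x₁, t₁)` such that either `t₁ > 0` and `(x₁, t₁) = (Φ_{0,σ(x)}(x), σ(x))` for some
`(x, 0) ∈ W`, or `t₁ = 0` and the forward trajectory of `x₁` leaves `W ∪ ∂W`
immediately. -/
def spEgress {M : Type*} [TopologicalSpace M]
    (Φ : M → ℝ → ℝ → M) (W : Set (M × ℝ)) : Set (M × ℝ) :=
  {p ∈ frontier W |
    (0 < p.2 ∧ ∃ x : M, (x, (0 : ℝ)) ∈ W ∧ spEgressTime Φ W x ≠ ⊤ ∧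
      p.2 = (spEgressTime Φ W x).toReal ∧ p.1 = Φ x 0 (spEgressTime Φ W x).toReal) ∨
    (p.2 = 0 ∧ ∃ ε > (0 : ℝ), ∀ t ∈ Set.Ioo (0 : ℝ) ε, (Φ p.1 0 t, t) ∉ W ∪ frontier W)}

/-- Strict egress points of `W ⊆ M × ℝ` for the semi-process `Φ`: egress points
whose continued trajectory stays outside `W ∪ ∂W` for a positive time interval
(by the semigroup property, `(Φ_{0,σ(x)+t}(x), σ(x)+t) = (Φ_{t₁,t}(x₁), t₁ + t)`). -/
def spStrictEgress {M : Type*} [TopologicalSpace M]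
    (Φ : M → ℝ → ℝ → M) (W : Set (M × ℝ)) : Set (M × ℝ) :=
  {p ∈ spEgress Φ W |
    ∃ ε > (0 : ℝ), ∀ t ∈ Set.Ioo (0 : ℝ) ε, (Φ p.1 p.2 t, p.2 + t) ∉ W ∪ frontier W}

/-- The section `S_τ = {(x, t) ∈ S : t = τ}` of a subset of the extended phase space. -/
def timeSection {M : Type*} (S : Set (M × ℝ)) (τ : ℝ) : Set (M × ℝ) :=
  {p ∈ S | p.2 = τ}


lemma egress_mem_of_lt {M : Type*} (Φ : M → ℝ → ℝ → M) (W : Set (M × ℝ)) (x : M)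
    {t : ℝ} (ht : 0 ≤ t) (h : ENNReal.ofReal t < spEgressTime Φ W x) :
    (Φ x 0 t, t) ∈ W := by
  obtain ⟨τ, hτ, hlt⟩ := lt_sSup_iff.1 h
  exact hτ t ht hlt

lemma egress_le {M : Type*} (Φ : M → ℝ → ℝ → M) (W : Set (M × ℝ)) (x : M)
    {t₁ : ℝ} (ht₁ : 0 ≤ t₁) (h : (Φ x 0 t₁, t₁) ∉ W) :
    spEgressTime Φ W x ≤ ENNReal.ofReal t₁ := by
  refine sSup_le fun τ hτ => ?_
  by_contra hlt
  push_neg at hlt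
  exact h (hτ t₁ ht₁ hlt)

lemma le_egress {M : Type*} (Φ : M → ℝ → ℝ → M) (W : Set (M × ℝ)) (x : M)
    {τ : ℝ} (h : ∀ t, 0 ≤ t → t < τ → (Φ x 0 t, t) ∈ W) :
    ENNReal.ofReal τ ≤ spEgressTime Φ W x :=
  le_sSup fun t ht hlt =>
    h t ht ((ENNReal.ofReal_lt_ofReal_iff_of_nonneg ht).1 hlt)

lemma egress_eq_top {M : Type*} (Φ : M → ℝ → ℝ → M) (W : Set (M × ℝ)) (x : M) :
    spEgressTime Φ W x = ⊤ ↔ ∀ t, 0 ≤ t → (Φ x 0 t, t) ∈ W := by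
  constructor
  · intro h t ht
    exact egress_mem_of_lt Φ W x ht (h ▸ ENNReal.ofReal_lt_top)
  · intro h
    exact top_le_iff.1 (le_sSup fun t ht _ => h t ht)

/-- Under the hypotheses of Theorem 2.13, there is a point `(x, 0)` on the path `Γ`
whose half-trajectory never leaves `W` (`σ(x) = ∞`) and which does not converge
to the equilibrium `x₀`. -/
theorem exists_nonleaving_nonconverging_solution
    {M : Type*} [TopologicalSpace M] (Φ : M → ℝ → ℝ → M)
    (hΦcont : ContinuousOn (fun q : M × ℝ × ℝ => Φ q.1 q.2.1 q.2.2) {q | 0 ≤ q.2.2})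
    (hΦ0 : ∀ x t₀, Φ x t₀ 0 = x)
    (hΦadd : ∀ (x : M) (t₀ t s : ℝ), 0 ≤ t → 0 ≤ s →
      Φ x t₀ (t + s) = Φ (Φ x t₀ t) (t₀ + t) s)
    (W : Set (M × ℝ)) (hWopen : IsOpen W)
    (hW0ne : (timeSection W 0).Nonempty)
    (hWeq : spEgress Φ W = spStrictEgress Φ W)
    (hW0e : (timeSection (spStrictEgress Φ W) 0).Nonempty)
    (x₀ : M)
    (hequil : ∀ t₀ ≥ (0 : ℝ), ∀ t ≥ (0 : ℝ), Φ x₀ t₀ t = x₀)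
    (hstab : ∀ U' : Set M, IsOpen U' → x₀ ∈ U' → ∃ V : Set M, IsOpen V ∧ x₀ ∈ V ∧
      ∀ x ∈ V, ∀ t₀ ≥ (0 : ℝ), ∀ t ≥ (0 : ℝ), Φ x t₀ t ∈ U')
    (U : Set M) (hUopen : IsOpen U) (hx₀U : x₀ ∈ U)
    (hUW : (closure U) ×ˢ (Set.univ : Set ℝ) ⊆ W)
    (Γ : ℝ → M × ℝ) (hΓcont : ContinuousOn Γ (Set.Icc 0 1))
    (hΓW : ∀ s ∈ Set.Ioo (0 : ℝ) 1, Γ s ∈ timeSection W 0)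
    (hΓ0 : Γ 0 = (x₀, 0))
    (hΓ1 : Γ 1 ∈ timeSection (spStrictEgress Φ W) 0) :
    ∃ s ∈ Set.Icc (0 : ℝ) 1, ∃ x : M, Γ s = (x, 0) ∧
      spEgressTime Φ W x = ⊤ ∧
      ¬ Filter.Tendsto (fun t => Φ x 0 t) Filter.atTop (nhds x₀) := by
  classical
  -- clamp function
  set ρ : ℝ → ℝ := fun s => max 0 (min s 1) with hρdef
  have hρcont : Continuous ρ := continuous_const.max (continuous_id.min continuous_const)
  have hρmem : ∀ s, ρ s ∈ Set.Icc (0:ℝ) 1 :=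
    fun s => ⟨le_max_left _ _, max_le (by norm_num) (min_le_right _ _)⟩
  have hρid : ∀ s ∈ Set.Icc (0:ℝ) 1, ρ s = s := by
    intro s hs
    simp only [hρdef]
    rw [min_eq_left hs.2, max_eq_right hs.1]
  -- the path of initial points
  set y : ℝ → M := fun s => (Γ (ρ s)).1 with hydef
  have hycont : Continuous y :=
    continuous_fst.comp (hΓcont.comp_continuous hρcont hρmem)
  -- the global flow map
  set F : ℝ × ℝ → M × ℝ := fun p => (Φ (y p.1) 0 (max p.2 0), max p.2 0) with hFdef
  have hFcont : Continuous F := by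
    have h1 : Continuous fun p : ℝ × ℝ => ((y p.1, (0:ℝ), max p.2 0) : M × ℝ × ℝ) :=
      (hycont.comp continuous_fst).prodMk
        (continuous_const.prodMk (continuous_snd.max continuous_const))
    have h2 : Continuous fun p : ℝ × ℝ => Φ (y p.1) 0 (max p.2 0) :=
      hΦcont.comp_continuous h1 (fun p => le_max_right p.2 0)
    exact h2.prodMk (continuous_snd.max continuous_const)
  have hFt : ∀ s t, 0 ≤ t → F (s, t) = (Φ (y s) 0 t, t) := by
    intro s t ht
    simp [hFdef, max_eq_left ht]
  have hclW : W ∪ frontier W = closure W := by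
    rw [hWopen.frontier_eq, Set.union_comm, Set.diff_union_of_subset subset_closure]
  -- the base point has infinite egress time
  have hy0 : y 0 = x₀ := by
    simp [hydef, hρid 0 ⟨le_rfl, by norm_num⟩, hΓ0]
  have hσ0 : spEgressTime Φ W (y 0) = ⊤ := by
    rw [egress_eq_top]
    intro t ht
    rw [hy0, hequil 0 le_rfl t ht]
    exact hUW ⟨subset_closure hx₀U, trivial⟩
  -- the endpoint has finite egress time
  have hy1 : y 1 = (Γ 1).1 := by
    simp [hydef, hρid 1 ⟨by norm_num, le_rfl⟩]
  have hΓ1W : Γ 1 ∉ W := by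
    have hfr : Γ 1 ∈ frontier W := hΓ1.1.1.1
    rw [hWopen.frontier_eq] at hfr
    exact hfr.2
  have hσ1 : spEgressTime Φ W (y 1) ≠ ⊤ := by
    have h0 : (Φ (y 1) 0 0, (0:ℝ)) ∉ W := by
      rw [hΦ0]
      have : ((y 1, (0:ℝ)) : M × ℝ) = Γ 1 := by
        rw [hy1]
        exact Prod.ext rfl hΓ1.2.symm
      rw [this]
      exact hΓ1W
    have := egress_le Φ W (y 1) le_rfl h0
    exact ne_top_of_le_ne_top (by simp) this
  -- the set of parameters with finite egress time
  set A : Set ℝ := {s | s ∈ Set.Icc (0:ℝ) 1 ∧ spEgressTime Φ W (y s) ≠ ⊤} with hAdef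
  have hA1 : (1:ℝ) ∈ A := ⟨⟨by norm_num, le_rfl⟩, hσ1⟩
  have hAne : A.Nonempty := ⟨1, hA1⟩
  have hAbdd : BddBelow A := ⟨0, fun a ha => ha.1.1⟩
  set σs : ℝ := sInf A with hσsdef
  have hσs0 : 0 ≤ σs := le_csInf hAne fun a ha => ha.1.1
  have hσs1 : σs ≤ 1 := csInf_le hAbdd hA1
  -- Claim (†): finiteness of egress time is open
  have hopen : ∀ s₀ ∈ Set.Icc (0:ℝ) 1, spEgressTime Φ W (y s₀) ≠ ⊤ →
      ∀ᶠ s in nhds s₀, spEgressTime Φ W (y s) ≠ ⊤ := by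
    intro s₀ hs₀ hne
    -- it suffices to find a trajectory point strictly outside the closure of W
    suffices h : ∃ t₁ : ℝ, 0 ≤ t₁ ∧ F (s₀, t₁) ∉ closure W by
      obtain ⟨t₁, ht₁, hout⟩ := h
      have hcont : Continuous fun s => F (s, t₁) :=
        hFcont.comp (continuous_id.prodMk continuous_const)
      have hev : ∀ᶠ s in nhds s₀, F (s, t₁) ∉ closure W :=
        hcont.continuousAt.eventually_mem (isClosed_closure.isOpen_compl.mem_nhds hout)
      filter_upwards [hev] with s hs
      rw [hFt s t₁ ht₁] at hs
      have : (Φ (y s) 0 t₁, t₁) ∉ W := fun hmem => hs (subset_closure hmem)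
      exact ne_top_of_le_ne_top (by simp) (egress_le Φ W (y s) ht₁ this)
    by_cases hs1 : s₀ = 1
    · -- use the strict egress property of Γ 1 at time 0
      obtain ⟨_, ε, hε, hstrict⟩ := hΓ1.1
      refine ⟨ε/2, by linarith, ?_⟩
      have h2 := hstrict (ε/2) ⟨by linarith, by linarith⟩
      rw [hΓ1.2] at h2
      rw [hs1, hFt 1 (ε/2) (by linarith), hy1, ← hclW]
      simpa using h2
    · -- interior case: build the egress point and use W⁻ = W⁻⁻
      have hs0 : s₀ ≠ 0 := by
        intro h
        exact hne (h ▸ hσ0)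
      have hs₀mem : s₀ ∈ Set.Ioo (0:ℝ) 1 :=
        ⟨lt_of_le_of_ne hs₀.1 (Ne.symm hs0), lt_of_le_of_ne hs₀.2 hs1⟩
      have hyW : ((y s₀, (0:ℝ)) : M × ℝ) ∈ W := by
        have h1 := hΓW s₀ hs₀mem
        have h2 : ((y s₀, (0:ℝ)) : M × ℝ) = Γ s₀ := by
          rw [hydef]
          have hρs : ρ s₀ = s₀ := hρid s₀ hs₀
          exact Prod.ext (by simp [hydef, hρs]) h1.2.symm
        rw [h2]
        exact h1.1
      set τ₀ : ℝ := (spEgressTime Φ W (y s₀)).toReal with hτ₀def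
      have hσpos : 0 < spEgressTime Φ W (y s₀) := by
        have hF0 : F (s₀, 0) ∈ W := by
          rw [hFt s₀ 0 le_rfl, hΦ0]
          exact hyW
        have hcont : Continuous fun t => F (s₀, t) :=
          hFcont.comp (continuous_const.prodMk continuous_id)
        have hev : ∀ᶠ t in nhds (0:ℝ), F (s₀, t) ∈ W :=
          hcont.continuousAt.eventually_mem (hWopen.mem_nhds hF0)
        rw [Metric.eventually_nhds_iff] at hev
        obtain ⟨δ, hδ, hδW⟩ := hev
        have hle : ENNReal.ofReal δ ≤ spEgressTime Φ W (y s₀) := by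
          refine le_egress Φ W (y s₀) fun t ht htδ => ?_
          have := hδW (show dist t 0 < δ by rw [Real.dist_eq, sub_zero, abs_of_nonneg ht]; exact htδ)
          rwa [hFt s₀ t ht] at this
        exact lt_of_lt_of_le (by simp [hδ]) hle
      have hτ₀pos : 0 < τ₀ := ENNReal.toReal_pos hσpos.ne' hne
      have hσeq : ENNReal.ofReal τ₀ = spEgressTime Φ W (y s₀) := ENNReal.ofReal_toReal hne
      have hD1 : ∀ t, 0 ≤ t → t < τ₀ → (Φ (y s₀) 0 t, t) ∈ W := by
        intro t ht htτ
        refine egress_mem_of_lt Φ W (y s₀) ht ?_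
        rw [← hσeq]
        exact (ENNReal.ofReal_lt_ofReal_iff hτ₀pos).2 htτ
      have hD2 : (Φ (y s₀) 0 τ₀, τ₀) ∉ W := by
        intro hmem
        have hFτ : F (s₀, τ₀) ∈ W := by rwa [hFt s₀ τ₀ hτ₀pos.le]
        have hcont : Continuous fun t => F (s₀, t) :=
          hFcont.comp (continuous_const.prodMk continuous_id)
        have hev : ∀ᶠ t in nhds τ₀, F (s₀, t) ∈ W :=
          hcont.continuousAt.eventually_mem (hWopen.mem_nhds hFτ)
        rw [Metric.eventually_nhds_iff] at hev
        obtain ⟨δ, hδ, hδW⟩ := hev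
        have hle : ENNReal.ofReal (τ₀ + δ/2) ≤ spEgressTime Φ W (y s₀) := by
          refine le_egress Φ W (y s₀) fun t ht htτ => ?_
          rcases lt_or_ge t τ₀ with h | h
          · exact hD1 t ht h
          · have : dist t τ₀ < δ := by rw [Real.dist_eq, abs_of_nonneg (by linarith)]; linarith
            have := hδW this
            rwa [hFt s₀ t ht] at this
        rw [← hσeq] at hle
        have : τ₀ + δ/2 ≤ τ₀ := by
          have := (ENNReal.ofReal_le_ofReal_iff hτ₀pos.le).1 hle
          linarith
        linarith
      have hpcl : (Φ (y s₀) 0 τ₀, τ₀) ∈ closure W := by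
        have hcont : Continuous fun t => F (s₀, t) :=
          hFcont.comp (continuous_const.prodMk continuous_id)
        have htend : Filter.Tendsto (fun t => F (s₀, t)) (nhdsWithin τ₀ (Set.Ioo 0 τ₀))
            (nhds (F (s₀, τ₀))) :=
          (hcont.continuousAt.continuousWithinAt).tendsto
        rw [hFt s₀ τ₀ hτ₀pos.le] at htend
        have hne' : (nhdsWithin τ₀ (Set.Ioo 0 τ₀)).NeBot := by
          rw [← mem_closure_iff_nhdsWithin_neBot, closure_Ioo hτ₀pos.ne]
          exact ⟨hτ₀pos.le, le_rfl⟩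
        refine mem_closure_of_tendsto htend ?_
        filter_upwards [self_mem_nhdsWithin] with t ht
        rw [hFt s₀ t ht.1.le]
        exact hD1 t ht.1.le ht.2
      have hegress : ((Φ (y s₀) 0 τ₀, τ₀) : M × ℝ) ∈ spEgress Φ W := by
        refine ⟨?_, Or.inl ⟨hτ₀pos, y s₀, hyW, hne, rfl, rfl⟩⟩
        rw [hWopen.frontier_eq]
        exact ⟨hpcl, hD2⟩
      rw [hWeq] at hegress
      obtain ⟨_, ε, hε, hstrict⟩ := hegress
      refine ⟨τ₀ + ε/2, by linarith, ?_⟩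
      have h2 := hstrict (ε/2) ⟨by linarith, by linarith⟩
      have hadd : Φ (y s₀) 0 (τ₀ + ε/2) = Φ (Φ (y s₀) 0 τ₀) (0 + τ₀) (ε/2) :=
        hΦadd (y s₀) 0 τ₀ (ε/2) hτ₀pos.le (by linarith)
      rw [hFt s₀ (τ₀ + ε/2) (by linarith), ← hclW, hadd]
      simpa [zero_add] using h2
  -- Claim (★): near a non-leaving converging parameter everything is non-leaving
  have hstar : ∀ s₀ : ℝ, spEgressTime Φ W (y s₀) = ⊤ →
      Filter.Tendsto (fun t => Φ (y s₀) 0 t) Filter.atTop (nhds x₀) →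
      ∀ᶠ s in nhds s₀, spEgressTime Φ W (y s) = ⊤ := by
    intro s₀ htop htend
    obtain ⟨V, hVopen, hx₀V, hV⟩ := hstab U hUopen hx₀U
    have hVev : ∀ᶠ t in Filter.atTop, Φ (y s₀) 0 t ∈ V :=
      htend.eventually (hVopen.eventually_mem hx₀V)
    obtain ⟨T₀, hT₀⟩ := hVev.exists_forall_of_atTop
    set T : ℝ := max T₀ 0 with hTdef
    have hT0 : 0 ≤ T := le_max_right _ _
    have hTV : Φ (y s₀) 0 T ∈ V := hT₀ T (le_max_left _ _)
    have htraj : ∀ t, 0 ≤ t → (Φ (y s₀) 0 t, t) ∈ W := (egress_eq_top Φ W (y s₀)).1 htop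
    -- tube lemma
    have hO : IsOpen (F ⁻¹' W) := hWopen.preimage hFcont
    have hsub : ({s₀} : Set ℝ) ×ˢ Set.Icc 0 T ⊆ F ⁻¹' W := by
      intro p hp
      simp only [Set.mem_prod, Set.mem_singleton_iff] at hp
      have hFp : F p = (Φ (y s₀) 0 p.2, p.2) := by
        rw [show p = (s₀, p.2) from Prod.ext hp.1 rfl]
        exact hFt s₀ p.2 hp.2.1
      show F p ∈ W
      rw [hFp]
      exact htraj p.2 hp.2.1
    obtain ⟨u, v, hu, hv, hsu, hTv, huv⟩ :=
      generalized_tube_lemma isCompact_singleton isCompact_Icc hO hsub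
    have h1 : ∀ᶠ s in nhds s₀, s ∈ u := hu.eventually_mem (hsu rfl)
    have h2 : ∀ᶠ s in nhds s₀, Φ (y s) 0 T ∈ V := by
      have hg : Continuous fun s => Φ (y s) 0 T := by
        have : (fun s => Φ (y s) 0 T) = fun s => (F (s, T)).1 := by
          funext s
          rw [hFt s T hT0]
        rw [this]
        exact continuous_fst.comp (hFcont.comp (continuous_id.prodMk continuous_const))
      exact hg.continuousAt.eventually_mem (hVopen.mem_nhds hTV)
    filter_upwards [h1, h2] with s hsu' hsV
    rw [egress_eq_top]
    intro t ht
    rcases le_or_gt t T with h | h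
    · have : F (s, t) ∈ W := huv ⟨hsu', hTv ⟨ht, h⟩⟩
      rwa [hFt s t ht] at this
    · have heq : Φ (y s) 0 t = Φ (Φ (y s) 0 T) (0 + T) (t - T) := by
        have := hΦadd (y s) 0 T (t - T) hT0 (by linarith)
        rwa [add_sub_cancel] at this
      rw [heq]
      refine hUW ⟨subset_closure ?_, trivial⟩
      exact hV _ hsV (0 + T) (by simpa using hT0) (t - T) (by linarith)
  -- the infimum parameter does not leave W
  have hσtop : spEgressTime Φ W (y σs) = ⊤ := by
    by_contra hne
    have hs0 : σs ≠ 0 := fun h => hne (h ▸ hσ0)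
    have hσspos : 0 < σs := lt_of_le_of_ne hσs0 (Ne.symm hs0)
    have hev := hopen σs ⟨hσs0, hσs1⟩ hne
    rw [Metric.eventually_nhds_iff] at hev
    obtain ⟨δ, hδ, hδE⟩ := hev
    set s' : ℝ := σs - min δ σs / 2 with hs'def
    have hmin : 0 < min δ σs := lt_min hδ hσspos
    have h1 : 0 < s' := by
      have : min δ σs ≤ σs := min_le_right _ _
      rw [hs'def]; linarith
    have h2 : s' < σs := by rw [hs'def]; linarith
    have h3 : dist s' σs < δ := by
      rw [Real.dist_eq, hs'def, abs_of_nonpos (by linarith)]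
      have : min δ σs ≤ δ := min_le_left _ _
      linarith
    have hmem : s' ∈ A := ⟨⟨h1.le, by linarith⟩, hδE h3⟩
    exact absurd (csInf_le hAbdd hmem) (not_le.2 h2)
  -- the infimum parameter does not converge to x₀
  have hnotconv : ¬ Filter.Tendsto (fun t => Φ (y σs) 0 t) Filter.atTop (nhds x₀) := by
    intro htend
    have hev := hstar σs hσtop htend
    rw [Metric.eventually_nhds_iff] at hev
    obtain ⟨δ, hδ, hδP⟩ := hev
    obtain ⟨a, haA, ha⟩ := exists_lt_of_csInf_lt hAne (show sInf A < σs + δ by rw [← hσsdef]; linarith)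
    have hle : σs ≤ a := csInf_le hAbdd haA
    have : dist a σs < δ := by rw [Real.dist_eq, abs_of_nonneg (by linarith)]; linarith
    exact haA.2 (hδP this)
  -- σs ≠ 1 since the egress time at 1 is finite
  have hσsne1 : σs ≠ 1 := by
    intro h
    exact (h ▸ hσ1) hσtop
  have hΓσ : Γ σs = (y σs, 0) := by
    rcases eq_or_lt_of_le hσs0 with h | h
    · rw [← h, hΓ0, hy0]
    · have hmem : σs ∈ Set.Ioo (0:ℝ) 1 := ⟨h, lt_of_le_of_ne hσs1 hσsne1⟩
      have h1 := hΓW σs hmem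
      have h2 : ρ σs = σs := hρid σs ⟨hσs0, hσs1⟩
      exact Prod.ext (by simp [hydef, h2]) h1.2
  exact ⟨σs, ⟨hσs0, hσs1⟩, y σs, hΓσ, hσtop, hnotconv⟩
end
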